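/- For every natural number n, Σ_{k=0}^{n} C(n,k)³ = Σ_{k=⌈n/2⌉}^{n} C(n,k)² · C(2k,n). -/

import Mathlib

open Finset

-- Partial Vandermonde: ∑_{m=0}^{p} C(p,m) C(q,p-m) = C(p+q,p)
lemma vand_range (p q : ℕ) :
    ∑ m ∈ Finset.range (p + 1), p.choose m * q.choose (p - m) = (p + q).choose p := by
  rw [Nat.add_choose_eq p q p, Finset.Nat.sum_antidiagonal_eq_sum_range_succ_mk]

-- termwise identity
lemma termwise (n j k : ℕ) (hjk : j ≤ k) (hkn : k ≤ n) :
    n.choose k * k.choose j * (n.choose k * k.choose (n - j)) =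
      n.choose j ^ 2 * ((n - j).choose (k - j) * j.choose (n - k)) := by
  rcases lt_or_ge k (n - j) with h | h
  · rw [Nat.choose_eq_zero_of_lt h, Nat.choose_eq_zero_of_lt (by omega : j < n - k)]
    ring
  · have h1 : n.choose k * k.choose j = n.choose j * (n - j).choose (k - j) :=
      Nat.choose_mul hjk
    have h2 : n.choose k * k.choose (n - j) =
        n.choose (n - j) * (n - (n - j)).choose (k - (n - j)) :=
      Nat.choose_mul h
    have h3 : n.choose (n - j) = n.choose j := Nat.choose_symm (by omega)
    have h4 : n - (n - j) = j := by omega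
    have h5 : j.choose (k - (n - j)) = j.choose (n - k) := by
      rw [← Nat.choose_symm (by omega : k - (n - j) ≤ j)]
      congr 1
      omega
    calc n.choose k * k.choose j * (n.choose k * k.choose (n - j))
        = (n.choose k * k.choose j) * (n.choose k * k.choose (n - j)) := by ring
      _ = (n.choose j * (n - j).choose (k - j)) * (n.choose j * j.choose (n - k)) := by
          rw [h1, h2, h3, h4, h5]
      _ = n.choose j ^ 2 * ((n - j).choose (k - j) * j.choose (n - k)) := by ring

-- inner sum over k for fixed j
lemma franel_inner_sum (n j : ℕ) (hj : j ≤ n) :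
    ∑ k ∈ Finset.range (n + 1),
        n.choose k * k.choose j * (n.choose k * k.choose (n - j)) = n.choose j ^ 3 := by
  have hsub : Finset.Icc j n ⊆ Finset.range (n + 1) := by
    intro x hx
    simp only [Finset.mem_Icc] at hx
    simp only [Finset.mem_range]
    omega
  rw [← Finset.sum_subset hsub (by
    intro x hx hx'
    simp only [Finset.mem_range] at hx
    simp only [Finset.mem_Icc] at hx'
    have : x < j := by omega
    rw [Nat.choose_eq_zero_of_lt this]
    ring)]
  rw [Finset.sum_congr rfl (fun k hk => by
    simp only [Finset.mem_Icc] at hk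
    exact termwise n j k hk.1 hk.2)]
  rw [← Finset.mul_sum]
  have hre : ∑ k ∈ Finset.Icc j n, (n - j).choose (k - j) * j.choose (n - k) =
      ∑ i ∈ Finset.range (n - j + 1), (n - j).choose i * j.choose (n - j - i) := by
    rw [← Finset.Ico_add_one_right_eq_Icc, Finset.sum_Ico_eq_sum_range]
    apply Finset.sum_congr (by congr 1; omega)
    intro i _
    congr 2
    · omega
    · omega
  rw [hre, vand_range (n - j) j]
  have : (n - j + j).choose (n - j) = n.choose j := by
    rw [(by omega : n - j + j = n), Nat.choose_symm hj]
  rw [this]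
  ring

theorem stmt5 (n : ℕ) :
    ∑ k ∈ Finset.range (n + 1), (n.choose k) ^ 3 =
      ∑ k ∈ Finset.Icc ((n + 1) / 2) n, (n.choose k) ^ 2 * ((2 * k).choose n) := by
  -- extend RHS to range (n+1)
  have hsub : Finset.Icc ((n + 1) / 2) n ⊆ Finset.range (n + 1) := by
    intro x hx
    simp only [Finset.mem_Icc] at hx
    simp only [Finset.mem_range]
    omega
  rw [show ∑ k ∈ Finset.Icc ((n + 1) / 2) n, (n.choose k) ^ 2 * ((2 * k).choose n) =
      ∑ k ∈ Finset.range (n + 1), (n.choose k) ^ 2 * ((2 * k).choose n) from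
    Finset.sum_subset hsub (by
      intro x hx hx'
      simp only [Finset.mem_range] at hx
      simp only [Finset.mem_Icc] at hx'
      have : 2 * x < n := by omega
      rw [Nat.choose_eq_zero_of_lt this, mul_zero])]
  -- expand (2k).choose n via Vandermonde
  have hexp : ∀ k, (2 * k).choose n = ∑ j ∈ Finset.range (n + 1), k.choose j * k.choose (n - j) := by
    intro k
    rw [(by ring : 2 * k = k + k), Nat.add_choose_eq k k n,
      Finset.Nat.sum_antidiagonal_eq_sum_range_succ_mk]
  calc ∑ k ∈ Finset.range (n + 1), n.choose k ^ 3
      = ∑ j ∈ Finset.range (n + 1), ∑ k ∈ Finset.range (n + 1),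
          n.choose k * k.choose j * (n.choose k * k.choose (n - j)) := by
        apply Finset.sum_congr rfl
        intro j hj
        simp only [Finset.mem_range] at hj
        rw [franel_inner_sum n j (by omega)]
    _ = ∑ k ∈ Finset.range (n + 1), ∑ j ∈ Finset.range (n + 1),
          n.choose k * k.choose j * (n.choose k * k.choose (n - j)) := Finset.sum_comm
    _ = ∑ k ∈ Finset.range (n + 1), n.choose k ^ 2 * (2 * k).choose n := by
        apply Finset.sum_congr rfl
        intro k _
        rw [hexp k, Finset.mul_sum]
        apply Finset.sum_congr rfl
        intro j _
        ring
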